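/- ∑_{n=1}^∞ (2n)! / (4ⁿ (n!)²) · 1/(2n) = log 2. -/

import Mathlib

open Finset Filter MeasureTheory intervalIntegral Real Topology



noncomputable def aa (n : ℕ) : ℝ := ((2 * n).factorial : ℝ) / (4 ^ n * ((n.factorial : ℝ)) ^ 2)

lemma aa_zero : aa 0 = 1 := by simp [aa]

lemma aa_pos (n : ℕ) : 0 < aa n := by
  unfold aa; positivity

lemma aa_succ (n : ℕ) : aa (n + 1) = aa n * ((2 * n + 1) / (2 * n + 2)) := by
  have h1 : 2 * (n + 1) = (2 * n) + 1 + 1 := by ring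
  unfold aa
  rw [h1, Nat.factorial_succ, Nat.factorial_succ, Nat.factorial_succ]
  have hf : (0:ℝ) < n.factorial := by positivity
  push_cast
  field_simp
  ring

lemma aa_le_one (n : ℕ) : aa n ≤ 1 := by
  induction n with
  | zero => simp [aa_zero]
  | succ k ih =>
    rw [aa_succ]
    have h : (2 * (k:ℝ) + 1) / (2 * k + 2) ≤ 1 := by
      rw [div_le_one (by positivity)]; linarith
    calc aa k * ((2 * k + 1) / (2 * k + 2)) ≤ 1 * 1 :=
          mul_le_mul ih h (by positivity) zero_le_one
      _ = 1 := by ring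



lemma aa_succ' (n : ℕ) : (2 * (n:ℝ) + 2) * aa (n + 1) = (2 * n + 1) * aa n := by
  rw [aa_succ]
  have : (2 * (n:ℝ) + 2) ≠ 0 := by positivity
  field_simp

lemma key (N : ℕ) (x : ℝ) :
    (1 - x) * (∑ n ∈ range (N + 1), aa n * (n * x ^ (n - 1)))
      - (1 / 2) * (∑ n ∈ range (N + 1), aa n * x ^ n)
      = -((N : ℝ) + 1 / 2) * aa N * x ^ N := by
  induction N with
  | zero => simp [aa_zero]
  | succ k ih =>
    rw [sum_range_succ, sum_range_succ (fun n => aa n * x ^ n)]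
    have hs : (k + 1 : ℕ) - 1 = k := by omega
    rw [hs]
    push_cast
    linear_combination ih + (x ^ k / 2) * aa_succ' k



lemma hasDeriv_h (N : ℕ) {x : ℝ} (hx : x < 1) :
    HasDerivAt (fun y => Real.sqrt (1 - y) * ∑ n ∈ range (N + 1), aa n * y ^ n)
      (-((N : ℝ) + 1 / 2) * aa N * x ^ N / Real.sqrt (1 - x)) x := by
  have h1x : (0:ℝ) < 1 - x := by linarith
  have hs : (0:ℝ) < Real.sqrt (1 - x) := Real.sqrt_pos.2 h1x
  have hsub : HasDerivAt (fun y : ℝ => 1 - y) (-1) x := by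
    simpa using (hasDerivAt_id x).const_sub 1
  have hsq : HasDerivAt (fun y => Real.sqrt (1 - y)) (-1 / (2 * Real.sqrt (1 - x))) x :=
    hsub.sqrt (ne_of_gt h1x)
  have hpoly : HasDerivAt (fun y => ∑ n ∈ range (N + 1), aa n * y ^ n)
      (∑ n ∈ range (N + 1), aa n * (n * x ^ (n - 1))) x := by
    apply HasDerivAt.fun_sum
    intro n _
    exact (hasDerivAt_pow n x).const_mul (aa n)
  have := hsq.fun_mul hpoly
  refine HasDerivAt.congr_deriv this (Eq.symm ?_)
  have hsq2 : Real.sqrt (1 - x) ^ 2 = 1 - x := Real.sq_sqrt h1x.le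
  have hk := key N x
  set P := ∑ n ∈ range (N + 1), aa n * x ^ n with hP
  set D := ∑ n ∈ range (N + 1), aa n * (n * x ^ (n - 1)) with hD
  field_simp
  linear_combination (-2:ℝ) * hk - 2 * D * hsq2

lemma tendsto_partial {t : ℝ} (h0 : 0 ≤ t) (h1 : t < 1) :
    Tendsto (fun N => ∑ n ∈ range N, aa n * t ^ n) atTop (𝓝 (1 / Real.sqrt (1 - t))) := by
  have h1t : (0:ℝ) < 1 - t := by linarith
  have hs : (0:ℝ) < Real.sqrt (1 - t) := Real.sqrt_pos.2 h1t
  have hbound : ∀ N : ℕ,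
      ‖Real.sqrt (1 - t) * (∑ n ∈ range (N + 1), aa n * t ^ n) - 1‖
        ≤ ((N : ℝ) + 1) * t ^ N / Real.sqrt (1 - t) * t := by
    intro N
    have hconv : Convex ℝ (Set.Icc (0:ℝ) t) := convex_Icc 0 t
    have hderiv : ∀ x ∈ Set.Icc (0:ℝ) t,
        HasDerivWithinAt (fun y => Real.sqrt (1 - y) * ∑ n ∈ range (N + 1), aa n * y ^ n)
          (-((N : ℝ) + 1 / 2) * aa N * x ^ N / Real.sqrt (1 - x)) (Set.Icc (0:ℝ) t) x :=
      fun x hx => (hasDeriv_h N (lt_of_le_of_lt hx.2 h1)).hasDerivWithinAt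
    have hb : ∀ x ∈ Set.Icc (0:ℝ) t,
        ‖-((N : ℝ) + 1 / 2) * aa N * x ^ N / Real.sqrt (1 - x)‖
          ≤ ((N : ℝ) + 1) * t ^ N / Real.sqrt (1 - t) := by
      intro x hx
      have hx0 := hx.1
      have hxt := hx.2
      have hx1 : x < 1 := lt_of_le_of_lt hxt h1
      have hsx : Real.sqrt (1 - t) ≤ Real.sqrt (1 - x) :=
        Real.sqrt_le_sqrt (by linarith)
      have hsx0 : (0:ℝ) < Real.sqrt (1 - x) := Real.sqrt_pos.2 (by linarith)
      rw [norm_div, norm_mul, norm_mul, Real.norm_of_nonneg hsx0.le, norm_neg,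
        Real.norm_of_nonneg (show (0:ℝ) ≤ (N : ℝ) + 1 / 2 by positivity),
        Real.norm_of_nonneg (aa_pos N).le,
        Real.norm_of_nonneg (pow_nonneg hx0 N)]
      have hnum : ((N : ℝ) + 1 / 2) * aa N * x ^ N ≤ ((N : ℝ) + 1) * t ^ N := by
        have hxN : x ^ N ≤ t ^ N := pow_le_pow_left₀ hx0 hxt N
        have h2 : ((N : ℝ) + 1 / 2) * aa N ≤ (N : ℝ) + 1 := by
          nlinarith [aa_le_one N, aa_pos N, Nat.cast_nonneg (α := ℝ) N]
        nlinarith [pow_nonneg hx0 N, pow_nonneg h0 N, Nat.cast_nonneg (α := ℝ) N]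
      exact div_le_div₀ (by positivity) hnum hs hsx
    have hmvt := hconv.norm_image_sub_le_of_norm_hasDerivWithin_le hderiv hb
      (Set.left_mem_Icc.2 h0) (Set.right_mem_Icc.2 h0)
    have h00 : ∑ n ∈ range (N + 1), aa n * (0:ℝ) ^ n = 1 := by
      rw [Finset.sum_range_succ']
      simp [aa_zero]
    simpa [h00, Real.norm_of_nonneg h0] using hmvt
  -- the bound tends to zero
  have hb0 : Tendsto (fun N : ℕ => ((N : ℝ) + 1) * t ^ N / Real.sqrt (1 - t) * t) atTop (𝓝 0) := by
    have h1' : Tendsto (fun N : ℕ => ((N : ℝ) + 1) * t ^ N) atTop (𝓝 0) := by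
      have hsum : Summable (fun N : ℕ => ((N : ℝ) + 1) * t ^ N) := by
        have ht : ‖t‖ < 1 := by rw [Real.norm_of_nonneg h0]; exact h1
        have := (summable_pow_mul_geometric_of_norm_lt_one 1 ht (R := ℝ))
        have h2 := summable_geometric_of_lt_one h0 h1
        simpa [pow_one, add_mul, one_mul] using this.add h2
      exact hsum.tendsto_atTop_zero
    have := (h1'.div_const (Real.sqrt (1 - t))).mul_const t
    simpa using this
  have hmain : Tendsto (fun N : ℕ => Real.sqrt (1 - t) * (∑ n ∈ range (N + 1), aa n * t ^ n))
      atTop (𝓝 1) := by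
    have := squeeze_zero_norm hbound hb0
    have h2 := this.add_const 1
    simpa using h2
  have hdiv := hmain.div_const (Real.sqrt (1 - t))
  have heq : ∀ N : ℕ, Real.sqrt (1 - t) * (∑ n ∈ range (N + 1), aa n * t ^ n) / Real.sqrt (1 - t)
      = ∑ n ∈ range (N + 1), aa n * t ^ n := fun N => by
    field_simp
  rw [show (fun N : ℕ => Real.sqrt (1 - t) * (∑ n ∈ range (N + 1), aa n * t ^ n) / Real.sqrt (1 - t))
      = fun N : ℕ => ∑ n ∈ range (N + 1), aa n * t ^ n from funext heq] at hdiv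
  exact (tendsto_add_atTop_iff_nat 1).mp hdiv



noncomputable def gg (u : ℝ) : ℝ := (1 / Real.sqrt (1 - u) - 1) / u
noncomputable def GG (u : ℝ) : ℝ := -2 * Real.log (1 + Real.sqrt (1 - u))

lemma GG_cont : Continuous GG := by
  apply Continuous.mul continuous_const
  apply Continuous.log
  · exact continuous_const.add (Real.continuous_sqrt.comp (continuous_const.sub continuous_id))
  · intro x
    have := Real.sqrt_nonneg (1 - x)
    positivity

lemma GG_deriv {u : ℝ} (hu : u ∈ Set.Ioo (0:ℝ) 1) : HasDerivAt GG (gg u) u := by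
  obtain ⟨h0, h1⟩ := hu
  have h1u : (0:ℝ) < 1 - u := by linarith
  have hs : (0:ℝ) < Real.sqrt (1 - u) := Real.sqrt_pos.2 h1u
  have hsub : HasDerivAt (fun y : ℝ => 1 - y) (-1) u := by
    simpa using (hasDerivAt_id u).const_sub 1
  have hsq : HasDerivAt (fun y => Real.sqrt (1 - y)) (-1 / (2 * Real.sqrt (1 - u))) u :=
    hsub.sqrt (ne_of_gt h1u)
  have hadd : HasDerivAt (fun y => 1 + Real.sqrt (1 - y)) (-1 / (2 * Real.sqrt (1 - u))) u :=
    hsq.const_add 1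
  have hlog : HasDerivAt (fun y => Real.log (1 + Real.sqrt (1 - y)))
      ((-1 / (2 * Real.sqrt (1 - u))) / (1 + Real.sqrt (1 - u))) u :=
    hadd.log (by positivity)
  have := hlog.const_mul (-2 : ℝ)
  refine HasDerivAt.congr_deriv this (Eq.symm ?_)
  have hsq2 : Real.sqrt (1 - u) ^ 2 = 1 - u := Real.sq_sqrt h1u.le
  unfold gg
  rw [div_eq_iff (ne_of_gt h0)]
  field_simp
  linear_combination -hsq2

lemma gg_nonneg {u : ℝ} (hu : u ∈ Set.Ioo (0:ℝ) 1) : 0 ≤ gg u := by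
  obtain ⟨h0, h1⟩ := hu
  have h1u : (0:ℝ) < 1 - u := by linarith
  have hs : (0:ℝ) < Real.sqrt (1 - u) := Real.sqrt_pos.2 h1u
  have hle : Real.sqrt (1 - u) ≤ 1 := Real.sqrt_le_one.2 (by linarith)
  have : (1:ℝ) ≤ 1 / Real.sqrt (1 - u) := by
    rw [le_div_iff₀ hs]; linarith
  apply div_nonneg (by linarith) h0.le

lemma gg_integrableOn : IntegrableOn gg (Set.Ioc (0:ℝ) 1) := by
  apply integrableOn_deriv_of_nonneg GG_cont.continuousOn
  · exact fun x hx => GG_deriv hx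
  · exact fun x hx => gg_nonneg hx

lemma gg_integral : ∫ y in (0:ℝ)..1, gg y = 2 * Real.log 2 := by
  rw [integral_eq_sub_of_hasDeriv_right_of_le zero_le_one GG_cont.continuousOn
    (fun x hx => (GG_deriv hx).hasDerivWithinAt)
    ((intervalIntegrable_iff_integrableOn_Ioc_of_le zero_le_one).2 gg_integrableOn)]
  unfold GG
  rw [show (1:ℝ) - 1 = 0 by ring, Real.sqrt_zero, sub_zero, Real.sqrt_one]
  rw [add_zero, Real.log_one]
  norm_num




noncomputable def qq (N : ℕ) (u : ℝ) : ℝ := ∑ n ∈ range N, aa (n + 1) * u ^ n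

lemma qq_tendsto {u : ℝ} (hu : u ∈ Set.Ioo (0:ℝ) 1) :
    Tendsto (fun N => qq N u) atTop (𝓝 (gg u)) := by
  obtain ⟨h0, h1⟩ := hu
  have hP := tendsto_partial h0.le h1
  have hP' : Tendsto (fun N => ∑ n ∈ range (N + 1), aa n * u ^ n) atTop
      (𝓝 (1 / Real.sqrt (1 - u))) :=
    hP.comp (tendsto_add_atTop_nat 1)
  have h2 : Tendsto (fun N => ((∑ n ∈ range (N + 1), aa n * u ^ n) - 1) / u) atTop
      (𝓝 (gg u)) := (hP'.sub_const 1).div_const u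
  convert h2 using 2 with N
  rw [Finset.sum_range_succ']
  simp only [aa_zero, pow_zero, one_mul, mul_one]
  rw [add_sub_cancel_right, eq_div_iff (ne_of_gt h0)]
  unfold qq
  rw [Finset.sum_mul]
  exact Finset.sum_congr rfl fun n _ => by ring

lemma qq_le_gg {u : ℝ} (hu : u ∈ Set.Ioo (0:ℝ) 1) (N : ℕ) : qq N u ≤ gg u := by
  have hmono : Monotone (fun N => qq N u) := by
    intro M M' h
    apply Finset.sum_le_sum_of_subset_of_nonneg (Finset.range_subset_range.2 h)
    intro n _ _
    exact mul_nonneg (aa_pos (n + 1)).le (pow_nonneg hu.1.le n)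
  exact hmono.ge_of_tendsto (qq_tendsto hu) N

lemma qq_nonneg {u : ℝ} (hu : 0 ≤ u) (N : ℕ) : 0 ≤ qq N u :=
  Finset.sum_nonneg fun n _ => mul_nonneg (aa_pos (n + 1)).le (pow_nonneg hu n)

lemma qq_integral (N : ℕ) : ∫ u in Set.Ioo (0:ℝ) 1, qq N u
    = ∑ n ∈ range N, aa (n + 1) / ((n : ℝ) + 1) := by
  rw [← MeasureTheory.integral_Ioc_eq_integral_Ioo, ← intervalIntegral.integral_of_le zero_le_one]
  unfold qq
  rw [intervalIntegral.integral_finset_sum]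
  · apply Finset.sum_congr rfl
    intro n _
    rw [intervalIntegral.integral_const_mul, integral_pow]
    norm_num [div_eq_mul_inv]
  · intro n _
    exact (Continuous.intervalIntegrable (by continuity) 0 1)

lemma main_tendsto : Tendsto (fun N => ∑ n ∈ range N, aa (n + 1) / ((n : ℝ) + 1)) atTop
    (𝓝 (2 * Real.log 2)) := by
  have hInt : IntegrableOn gg (Set.Ioo (0:ℝ) 1) :=
    gg_integrableOn.mono_set Set.Ioo_subset_Ioc_self
  have hDCT := MeasureTheory.tendsto_integral_of_dominated_convergence
    (μ := volume.restrict (Set.Ioo (0:ℝ) 1)) (F := fun N u => qq N u) (f := gg) gg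
    (fun N => (Continuous.aestronglyMeasurable (by unfold qq; continuity)))
    hInt
    (fun N => by
      filter_upwards [ae_restrict_mem measurableSet_Ioo] with u hu
      rw [Real.norm_of_nonneg (qq_nonneg hu.1.le N)]
      exact qq_le_gg hu N)
    (by
      filter_upwards [ae_restrict_mem measurableSet_Ioo] with u hu
      exact qq_tendsto hu)
  have hg : ∫ u in Set.Ioo (0:ℝ) 1, gg u = 2 * Real.log 2 := by
    rw [← MeasureTheory.integral_Ioc_eq_integral_Ioo, ← intervalIntegral.integral_of_le zero_le_one]
    exact gg_integral
  rw [hg] at hDCT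
  convert hDCT using 2 with N
  exact (qq_integral N).symm

theorem stmt8 :
    ∑' n : ℕ, (((2 * (n + 1)).factorial : ℝ) /
        (4 ^ (n + 1) * ((n + 1).factorial : ℝ) ^ 2) * (1 / (2 * (n + 1)))) =
      Real.log 2 := by
  have hterm : ∀ n : ℕ, (((2 * (n + 1)).factorial : ℝ) /
      (4 ^ (n + 1) * ((n + 1).factorial : ℝ) ^ 2) * (1 / (2 * (n + 1))))
      = (1 / 2) * (aa (n + 1) / ((n : ℝ) + 1)) := by
    intro n
    unfold aa
    have h1 : ((n:ℝ) + 1) ≠ 0 := by positivity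
    have h2 : (((n+1).factorial : ℝ)) ≠ 0 := by positivity
    have h3 : ((4:ℝ) ^ (n+1)) ≠ 0 := by positivity
    field_simp
  have htendsto : Tendsto (fun N => ∑ n ∈ range N, (((2 * (n + 1)).factorial : ℝ) /
      (4 ^ (n + 1) * ((n + 1).factorial : ℝ) ^ 2) * (1 / (2 * (n + 1))))) atTop
      (𝓝 (Real.log 2)) := by
    simp only [hterm]
    rw [show Real.log 2 = (1/2) * (2 * Real.log 2) by ring]
    simpa [Finset.mul_sum] using main_tendsto.const_mul (1/2 : ℝ)
  have hsummable : Summable (fun n : ℕ => (((2 * (n + 1)).factorial : ℝ) /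
      (4 ^ (n + 1) * ((n + 1).factorial : ℝ) ^ 2) * (1 / (2 * (n + 1))))) := by
    apply summable_of_sum_range_le (c := Real.log 2)
    · intro n
      rw [hterm]
      exact mul_nonneg (by norm_num) (div_nonneg (aa_pos _).le (by positivity))
    · intro N
      apply Monotone.ge_of_tendsto _ htendsto N
      intro M M' h
      apply Finset.sum_le_sum_of_subset_of_nonneg (Finset.range_subset_range.2 h)
      intro n _ _
      rw [hterm]
      exact mul_nonneg (by norm_num) (div_nonneg (aa_pos _).le (by positivity))
  exact tendsto_nhds_unique hsummable.hasSum.tendsto_sum_nat htendsto
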